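/- Let p, q be nonzero reals with p ≠ q, and consider the evolution algebra with matrix (1/2)[[p+q, p−q],[p−q, p+q]]. If x = (x₁, x₂) is an idempotent with x₁ x₂ ≠ 0 and x₁ ≠ x₂, then u = x₁/x₂ satisfies (p−q)u² − 2qu + (p−q) = 0; in particular such an idempotent with x₁ ≠ x₂ exists only if the discriminant D = p(2q − p) ≥ 0. -/

import Mathlib

theorem stmt_15 (p q : ℝ) (hp : p ≠ 0) (hq : q ≠ 0) (hpq : p ≠ q)
    (x₁ x₂ : ℝ)
    (hid1 : x₁ = (p + q) / 2 * x₁ ^ 2 + (p - q) / 2 * x₂ ^ 2)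
    (hid2 : x₂ = (p - q) / 2 * x₁ ^ 2 + (p + q) / 2 * x₂ ^ 2)
    (hxy : x₁ * x₂ ≠ 0) (hne : x₁ ≠ x₂) :
    (p - q) * (x₁ / x₂) ^ 2 - 2 * q * (x₁ / x₂) + (p - q) = 0 ∧
    0 ≤ p * (2 * q - p) := by
  have hx2 : x₂ ≠ 0 := fun h => hxy (by simp [h])
  have hd : x₁ - x₂ ≠ 0 := sub_ne_zero.mpr hne
  have hA : x₁ + x₂ = p * (x₁ ^ 2 + x₂ ^ 2) := by linear_combination hid1 + hid2
  have hB : (x₁ - x₂) * (q * (x₁ + x₂)) = (x₁ - x₂) * 1 := by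
    linear_combination hid2 - hid1
  have hB' : q * (x₁ + x₂) = 1 := mul_left_cancel₀ hd hB
  have key : (p - q) * x₁ ^ 2 - 2 * q * (x₁ * x₂) + (p - q) * x₂ ^ 2 = 0 := by
    linear_combination -hA - (x₁ + x₂) * hB'
  have h1 : (p - q) * (x₁ / x₂) ^ 2 - 2 * q * (x₁ / x₂) + (p - q) = 0 := by
    field_simp
    linear_combination key
  refine ⟨h1, ?_⟩
  have h2 : p * (2 * q - p) = ((p - q) * (x₁ / x₂) - q) ^ 2 := by
    linear_combination (q - p) * h1
  rw [h2]; positivity
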